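/- Let J ⊂ I ⊂ S_f be monomial ideals, D : I/J = ⊕_{i=1}^r u_i K[Z_i] a Stanley decomposition of I/J, and d = max{|Z_i| : 1 ≤ i ≤ r}. Then H_{I/J}(t) = P_{I/J}(t)/(1-t)^d for a polynomial P_{I/J}(t) with P_{I/J}(1) = |{i : |Z_i| = d}|. Consequently, the number of Stanley spaces of maximal dimension in a Stanley decomposition of I/J is independent of the chosen Stanley decomposition. -/

import Mathlib

/-!
Combinatorial model of the localized polynomial ring `S_f`, where
`S = K[x_1, …, x_n]`, `A ⊆ {1, …, n}` and `f = ∏_{j ∈ A} x_j`.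

Since all the `ℤⁿ`-graded components of `S_f` are at most one-dimensional over `K`,
monomial `K`-subspaces of `S_f` (in particular monomial ideals, Stanley spaces and
modules `I/J`) are faithfully encoded by their sets of exponent vectors `a : Fin n → ℤ`,
direct sum decompositions into monomial subspaces correspond exactly to partitions of
the exponent sets, and (for those sets `Z` considered here) `u·K[Z]` is automatically a
free `K[Z]`-module.
-/

/-- Exponent vectors of the monomials of `S_f`: all `a : ℤⁿ` with `a j ≥ 0` for `j ∉ A`. -/
def SfMon {n : ℕ} (A : Finset (Fin n)) : Set (Fin n → ℤ) :=
  {a | ∀ j, j ∉ A → 0 ≤ a j}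

/-- `M` is the set of exponent vectors of the monomials of a monomial ideal of `S_f`
(for `A = ∅` this is a monomial ideal of the polynomial ring `S` itself). -/
def IsMonomialIdeal {n : ℕ} (A : Finset (Fin n)) (M : Set (Fin n → ℤ)) : Prop :=
  M ⊆ SfMon A ∧ ∀ a ∈ M, ∀ c ∈ SfMon A, a + c ∈ M

/-- Admissible sets of "variables" for Stanley spaces in `S_f`: `(i, true)` stands for
`x i` and `(i, false)` for `x i⁻¹`; inverse variables exist only for `i ∈ A`, and
`{x i, x i⁻¹} ⊄ Z`. -/
def ZOk {n : ℕ} (A : Finset (Fin n)) (Z : Finset (Fin n × Bool)) : Prop :=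
  (∀ i : Fin n, (i, false) ∈ Z → i ∈ A) ∧
  ∀ i : Fin n, ¬((i, true) ∈ Z ∧ (i, false) ∈ Z)

/-- Exponent vectors of the monomials of the Stanley space `u·K[Z]`. -/
def stanleySet {n : ℕ} (u : Fin n → ℤ) (Z : Finset (Fin n × Bool)) : Set (Fin n → ℤ) :=
  {a | ∀ i : Fin n, ((i, true) ∈ Z → u i ≤ a i) ∧ ((i, false) ∈ Z → a i ≤ u i) ∧
      ((i, true) ∉ Z → (i, false) ∉ Z → a i = u i)}

/-- The family of Stanley spaces `u i · K[Z i]` is a Stanley decomposition of the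
monomial `K`-vector space whose monomials have exponent vectors in `M`. -/
def IsStanleyDecompOn {n : ℕ} (A : Finset (Fin n)) (M : Set (Fin n → ℤ)) {ι : Type}
    (u : ι → Fin n → ℤ) (Z : ι → Finset (Fin n × Bool)) : Prop :=
  Finite ι ∧ (∀ i, ZOk A (Z i)) ∧
  Pairwise (fun i j : ι => Disjoint (stanleySet (u i) (Z i)) (stanleySet (u j) (Z j))) ∧
  (⋃ i, stanleySet (u i) (Z i)) = M

/-- Stanley depth of the monomial `K`-space with exponent set `M` (value `⊤` for `M = ∅`). -/
noncomputable def sdepth {n : ℕ} (A : Finset (Fin n)) (M : Set (Fin n → ℤ)) : ℕ∞ :=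
  sSup {k : ℕ∞ | ∃ (r : ℕ) (u : Fin r → Fin n → ℤ) (Z : Fin r → Finset (Fin n × Bool)),
    IsStanleyDecompOn A M u Z ∧ ∀ i, k ≤ ((Z i).card : ℕ∞)}

/-- The exponent vector of `f = ∏_{j ∈ A} x_j`. -/
def fVec {n : ℕ} (A : Finset (Fin n)) : Fin n → ℤ := fun i => if i ∈ A then 1 else 0

/-- Localization at `f` of a monomial ideal (given by its set of exponent vectors). -/
def locSet {n : ℕ} (A : Finset (Fin n)) (M : Set (Fin n → ℤ)) : Set (Fin n → ℤ) :=
  {b ∈ SfMon A | ∃ k : ℕ, b + (k : ℤ) • fVec A ∈ M}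

/-- `|a| = Σ_i |a_i|`, the degree used for the Hilbert series. -/
def degAbs {n : ℕ} (a : Fin n → ℤ) : ℕ := ∑ i, (a i).natAbs

/-- The Hilbert series `H_M(t) = Σ_d H(M,d) t^d`, `H(M,d) = #{a ∈ M : |a| = d}`, of the
`ℤⁿ`-graded `K`-vector space with monomial exponent set `M`. -/
noncomputable def hilbSeries {n : ℕ} (M : Set (Fin n → ℤ)) : PowerSeries ℚ :=
  PowerSeries.mk fun d => (({a ∈ M | degAbs a = d}).ncard : ℚ)

/-- A prime filtration `J = N 0 ⊂ N 1 ⊂ … ⊂ N r = I` of `I/J` by monomial ideals of `S_f`,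
with `i`-th factor isomorphic, as a `ℤⁿ`-graded module, to `(S_f/P_{B i})(-a i)`, where
`P_B` is the monomial prime ideal generated by the variables `x j`, `j ∈ B`. -/
def IsPrimeFiltration {n : ℕ} (A : Finset (Fin n)) (J I : Set (Fin n → ℤ)) (r : ℕ)
    (N : Fin (r + 1) → Set (Fin n → ℤ)) (B : Fin r → Finset (Fin n))
    (a : Fin r → Fin n → ℤ) : Prop :=
  N 0 = J ∧ N (Fin.last r) = I ∧
  (∀ i : Fin (r + 1), IsMonomialIdeal A (N i)) ∧
  (∀ i : Fin r, N i.castSucc ⊂ N i.succ) ∧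
  (∀ i : Fin r, ∀ j ∈ A, j ∉ B i) ∧
  (∀ i : Fin r, ∀ j, 0 ≤ a i j) ∧
  (∀ i : Fin r, ∀ j ∈ A, a i j = 0) ∧
  (∀ i : Fin r, N i.succ \ N i.castSucc =
    {b | ∃ c ∈ SfMon A, (∀ j ∈ B i, c j = 0) ∧ b = a i + c})

/-- `fdepth` of `I/J` (value `⊤` for `I = J`); `dim S_f/P_B = n - |B|`. -/
noncomputable def fdepth {n : ℕ} (A : Finset (Fin n)) (J I : Set (Fin n → ℤ)) : ℕ∞ :=
  sSup {k : ℕ∞ | ∃ (r : ℕ) (N : Fin (r + 1) → Set (Fin n → ℤ)) (B : Fin r → Finset (Fin n))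
      (a : Fin r → Fin n → ℤ), IsPrimeFiltration A J I r N B a ∧
      ∀ i, k ≤ ((n - (B i).card : ℕ) : ℕ∞)}

/-- The set of exponent vectors of the monomials of the colon ideal `(J :_{S_f} I)`,
which is the annihilator of `I/J`. -/
def colonSet {n : ℕ} (A : Finset (Fin n)) (I J : Set (Fin n → ℤ)) : Set (Fin n → ℤ) :=
  {c ∈ SfMon A | ∀ a ∈ I, a + c ∈ J}

/-- The monomial prime `P_B·S_f` contains the monomial ideal with exponent set `Q`. -/
def primeContainsIdeal {n : ℕ} (B : Finset (Fin n)) (Q : Set (Fin n → ℤ)) : Prop :=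
  ∀ c ∈ Q, ∃ j ∈ B, 1 ≤ c j

/-- `P_B·S_f` is a minimal prime ideal of the module `I/J`, i.e. a prime of `S_f`
(so `B ∩ A = ∅`) minimal among those containing `ann(I/J) = (J : I)`. -/
def IsMinimalPrimeOf {n : ℕ} (A B : Finset (Fin n)) (I J : Set (Fin n → ℤ)) : Prop :=
  (∀ j ∈ A, j ∉ B) ∧ primeContainsIdeal B (colonSet A I J) ∧
  ∀ B' ⊆ B, primeContainsIdeal B' (colonSet A I J) → B' = B
namespace SDaux

open Finset

variable {n : ℕ}

lemma box_finite (d : ℕ) : {a : Fin n → ℤ | ∀ i, (a i).natAbs ≤ d}.Finite := by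
  apply Set.Finite.subset (Set.Finite.pi (fun _ : Fin n => Set.finite_Icc (-(d:ℤ)) d))
  intro a ha
  simp only [Set.mem_pi, Set.mem_univ, Set.mem_Icc, forall_true_left]
  intro i; have := ha i; constructor <;> omega

lemma coord_le_degAbs (a : Fin n → ℤ) (i : Fin n) : (a i).natAbs ≤ degAbs a :=
  Finset.single_le_sum (f := fun j => (a j).natAbs) (fun _ _ => Nat.zero_le _)
    (Finset.mem_univ i)

lemma stanley_sliceFin (u : Fin n → ℤ) (Z : Finset (Fin n × Bool)) (d : ℕ) :
    {a ∈ stanleySet u Z | degAbs a = d}.Finite := by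
  apply (box_finite d).subset
  rintro a ⟨-, hd⟩ i
  rw [← hd]; exact coord_le_degAbs a i

lemma hilb_union {s t : Set (Fin n → ℤ)} (h : Disjoint s t)
    (hs : ∀ d, {a ∈ s | degAbs a = d}.Finite) (ht : ∀ d, {a ∈ t | degAbs a = d}.Finite) :
    hilbSeries (s ∪ t) = hilbSeries s + hilbSeries t := by
  ext d
  simp only [hilbSeries, PowerSeries.coeff_mk, map_add]
  have hset : {a ∈ s ∪ t | degAbs a = d} = {a ∈ s | degAbs a = d} ∪ {a ∈ t | degAbs a = d} := by
    ext a; simp only [Set.mem_setOf_eq, Set.mem_union]; tauto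
  have hdisj : Disjoint {a ∈ s | degAbs a = d} {a ∈ t | degAbs a = d} :=
    Disjoint.mono (fun a ha => ha.1) (fun a ha => ha.1) h
  rw [hset, Set.ncard_union_eq hdisj (hs d) (ht d)]
  push_cast; ring

lemma hilb_iUnion : ∀ {r : ℕ} (S : Fin r → Set (Fin n → ℤ)),
    (∀ i d, {a ∈ S i | degAbs a = d}.Finite) →
    Pairwise (fun i j => Disjoint (S i) (S j)) →
    hilbSeries (⋃ i, S i) = ∑ i, hilbSeries (S i) := by
  intro r
  induction r with
  | zero =>
    intro S _ _
    have h1 : (⋃ i, S i) = ∅ := by simp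
    rw [h1, show (∑ i, hilbSeries (S i)) = 0 by simp]
    ext d; simp [hilbSeries]
  | succ r ih =>
    intro S hfin hdisj
    have hU : (⋃ i, S i) = S 0 ∪ ⋃ i : Fin r, S i.succ := by
      ext a
      simp only [Set.mem_iUnion, Set.mem_union]
      constructor
      · rintro ⟨i, hi⟩
        rcases Fin.eq_zero_or_eq_succ i with h | ⟨j, h⟩
        · subst h; exact Or.inl hi
        · subst h; exact Or.inr ⟨j, hi⟩
      · rintro (h | ⟨j, hj⟩)
        · exact ⟨0, h⟩
        · exact ⟨j.succ, hj⟩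
    have hfin' : ∀ d, {a ∈ ⋃ i : Fin r, S i.succ | degAbs a = d}.Finite := by
      intro d
      have h2 : {a ∈ ⋃ i : Fin r, S i.succ | degAbs a = d}
          = ⋃ i : Fin r, {a ∈ S i.succ | degAbs a = d} := by
        ext a; simp only [Set.mem_iUnion, Set.mem_setOf_eq]; tauto
      rw [h2]; exact Set.finite_iUnion fun i => hfin i.succ d
    have hd0 : Disjoint (S 0) (⋃ i : Fin r, S i.succ) :=
      Set.disjoint_iUnion_right.mpr fun i => hdisj (Fin.succ_ne_zero i).symm
    rw [hU, hilb_union hd0 (hfin 0) hfin',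
      ih (fun i => S i.succ) (fun i => hfin i.succ)
        (fun i j hij => hdisj (by simpa using hij)), Fin.sum_univ_succ]

lemma degAbs_update (a : Fin n → ℤ) (i₀ : Fin n) (v : ℤ) :
    degAbs (Function.update a i₀ v) + (a i₀).natAbs = degAbs a + v.natAbs := by
  have h1 : (fun j => ((Function.update a i₀ v) j).natAbs)
      = Function.update (fun j => (a j).natAbs) i₀ v.natAbs := by
    funext j
    by_cases h : j = i₀
    · subst h; simp
    · simp [Function.update_of_ne h]
  have h2 : degAbs (Function.update a i₀ v)
      = v.natAbs + ∑ j ∈ Finset.univ.erase i₀, (a j).natAbs := by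
    calc degAbs (Function.update a i₀ v)
        = ∑ j, Function.update (fun j => (a j).natAbs) i₀ v.natAbs j :=
          Finset.sum_congr rfl fun j _ => congrFun h1 j
      _ = _ := by
          rw [Finset.sum_update_of_mem (Finset.mem_univ i₀),
            Finset.sdiff_singleton_eq_erase]
  have h3 : degAbs a = (a i₀).natAbs + ∑ j ∈ Finset.univ.erase i₀, (a j).natAbs := by
    rw [degAbs, ← Finset.add_sum_erase _ _ (Finset.mem_univ i₀)]
  omega

lemma stanley_erase_true {Z : Finset (Fin n × Bool)} {i₀ : Fin n} (u : Fin n → ℤ)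
    (hz : (i₀, true) ∈ Z) (hnf : (i₀, false) ∉ Z) :
    stanleySet u (Z.erase (i₀, true)) = {a ∈ stanleySet u Z | a i₀ = u i₀} := by
  ext a
  constructor
  · intro h
    have ha : a i₀ = u i₀ :=
      (h i₀).2.2 (Finset.notMem_erase _ _) (fun hm => hnf (Finset.mem_of_mem_erase hm))
    refine ⟨fun i => ⟨?_, ?_, ?_⟩, ha⟩
    · intro hi
      by_cases hii : i = i₀
      · subst hii; omega
      · exact (h i).1 (Finset.mem_erase.mpr ⟨by simp [hii], hi⟩)
    · intro hi
      exact (h i).2.1 (Finset.mem_erase.mpr ⟨by simp, hi⟩)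
    · intro h1 h2
      exact (h i).2.2 (fun hm => h1 (Finset.mem_of_mem_erase hm))
        (fun hm => h2 (Finset.mem_of_mem_erase hm))
  · rintro ⟨h, ha⟩ i
    refine ⟨fun hi => (h i).1 (Finset.mem_of_mem_erase hi),
      fun hi => (h i).2.1 (Finset.mem_of_mem_erase hi), fun h1 h2 => ?_⟩
    by_cases hii : i = i₀
    · subst hii; exact ha
    · exact (h i).2.2 (fun hm => h1 (Finset.mem_erase.mpr ⟨by simp [hii], hm⟩))
        (fun hm => h2 (Finset.mem_erase.mpr ⟨by simp, hm⟩))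

lemma stanley_erase_false {Z : Finset (Fin n × Bool)} {i₀ : Fin n} (u : Fin n → ℤ)
    (hz : (i₀, false) ∈ Z) (hnt : (i₀, true) ∉ Z) :
    stanleySet u (Z.erase (i₀, false)) = {a ∈ stanleySet u Z | a i₀ = u i₀} := by
  ext a
  constructor
  · intro h
    have ha : a i₀ = u i₀ :=
      (h i₀).2.2 (fun hm => hnt (Finset.mem_of_mem_erase hm)) (Finset.notMem_erase _ _)
    refine ⟨fun i => ⟨?_, ?_, ?_⟩, ha⟩
    · intro hi
      exact (h i).1 (Finset.mem_erase.mpr ⟨by simp, hi⟩)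
    · intro hi
      by_cases hii : i = i₀
      · subst hii; omega
      · exact (h i).2.1 (Finset.mem_erase.mpr ⟨by simp [hii], hi⟩)
    · intro h1 h2
      exact (h i).2.2 (fun hm => h1 (Finset.mem_of_mem_erase hm))
        (fun hm => h2 (Finset.mem_of_mem_erase hm))
  · rintro ⟨h, ha⟩ i
    refine ⟨fun hi => (h i).1 (Finset.mem_of_mem_erase hi),
      fun hi => (h i).2.1 (Finset.mem_of_mem_erase hi), fun h1 h2 => ?_⟩
    by_cases hii : i = i₀
    · subst hii; exact ha
    · exact (h i).2.2 (fun hm => h1 (Finset.mem_erase.mpr ⟨by simp, hm⟩))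
        (fun hm => h2 (Finset.mem_erase.mpr ⟨by simp [hii], hm⟩))

lemma stanley_update_true {Z : Finset (Fin n × Bool)} {i₀ : Fin n} (u : Fin n → ℤ)
    (hz : (i₀, true) ∈ Z) (hnf : (i₀, false) ∉ Z) :
    stanleySet (Function.update u i₀ (u i₀ + 1)) Z
      = {a ∈ stanleySet u Z | u i₀ + 1 ≤ a i₀} := by
  ext a
  constructor
  · intro h
    have h0 := (h i₀).1 hz
    rw [Function.update_self] at h0
    refine ⟨fun i => ⟨?_, ?_, ?_⟩, h0⟩
    · intro hi
      by_cases hii : i = i₀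
      · subst hii; omega
      · have := (h i).1 hi; rwa [Function.update_of_ne hii] at this
    · intro hi
      by_cases hii : i = i₀
      · subst hii; exact absurd hi hnf
      · have := (h i).2.1 hi; rwa [Function.update_of_ne hii] at this
    · intro h1 h2
      by_cases hii : i = i₀
      · subst hii; exact absurd hz h1
      · have := (h i).2.2 h1 h2; rwa [Function.update_of_ne hii] at this
  · rintro ⟨h, ha⟩ i
    by_cases hii : i = i₀
    · subst hii
      exact ⟨fun _ => by rw [Function.update_self]; exact ha,
        fun hf => absurd hf hnf, fun h1 _ => absurd hz h1⟩
    · refine ⟨?_, ?_, ?_⟩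
      · intro hi; rw [Function.update_of_ne hii]; exact (h i).1 hi
      · intro hi; rw [Function.update_of_ne hii]; exact (h i).2.1 hi
      · intro h1 h2; rw [Function.update_of_ne hii]; exact (h i).2.2 h1 h2

lemma stanley_update_false {Z : Finset (Fin n × Bool)} {i₀ : Fin n} (u : Fin n → ℤ)
    (hz : (i₀, false) ∈ Z) (hnt : (i₀, true) ∉ Z) :
    stanleySet (Function.update u i₀ (u i₀ - 1)) Z
      = {a ∈ stanleySet u Z | a i₀ ≤ u i₀ - 1} := by
  ext a
  constructor
  · intro h
    have h0 := (h i₀).2.1 hz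
    rw [Function.update_self] at h0
    refine ⟨fun i => ⟨?_, ?_, ?_⟩, h0⟩
    · intro hi
      by_cases hii : i = i₀
      · subst hii; exact absurd hi hnt
      · have := (h i).1 hi; rwa [Function.update_of_ne hii] at this
    · intro hi
      by_cases hii : i = i₀
      · subst hii; omega
      · have := (h i).2.1 hi; rwa [Function.update_of_ne hii] at this
    · intro h1 h2
      by_cases hii : i = i₀
      · subst hii; exact absurd hz h2
      · have := (h i).2.2 h1 h2; rwa [Function.update_of_ne hii] at this
  · rintro ⟨h, ha⟩ i
    by_cases hii : i = i₀
    · subst hii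
      exact ⟨fun ht => absurd ht hnt,
        fun _ => by rw [Function.update_self]; exact ha, fun _ h2 => absurd hz h2⟩
    · refine ⟨?_, ?_, ?_⟩
      · intro hi; rw [Function.update_of_ne hii]; exact (h i).1 hi
      · intro hi; rw [Function.update_of_ne hii]; exact (h i).2.1 hi
      · intro h1 h2; rw [Function.update_of_ne hii]; exact (h i).2.2 h1 h2

lemma stanley_split_true {Z : Finset (Fin n × Bool)} {i₀ : Fin n} (u : Fin n → ℤ)
    (hz : (i₀, true) ∈ Z) (hnf : (i₀, false) ∉ Z) :
    stanleySet u Z = stanleySet u (Z.erase (i₀, true))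
      ∪ stanleySet (Function.update u i₀ (u i₀ + 1)) Z := by
  rw [stanley_erase_true u hz hnf, stanley_update_true u hz hnf]
  ext a
  constructor
  · intro h
    rcases le_or_gt (a i₀) (u i₀) with hle | hlt
    · exact Or.inl ⟨h, le_antisymm hle ((h i₀).1 hz)⟩
    · exact Or.inr ⟨h, hlt⟩
  · rintro (⟨h, -⟩ | ⟨h, -⟩) <;> exact h

lemma stanley_split_disj_true {Z : Finset (Fin n × Bool)} {i₀ : Fin n} (u : Fin n → ℤ)
    (hz : (i₀, true) ∈ Z) (hnf : (i₀, false) ∉ Z) :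
    Disjoint (stanleySet u (Z.erase (i₀, true)))
      (stanleySet (Function.update u i₀ (u i₀ + 1)) Z) := by
  rw [stanley_erase_true u hz hnf, stanley_update_true u hz hnf]
  rw [Set.disjoint_left]
  rintro a ⟨-, h1⟩ ⟨-, h2⟩
  omega

lemma stanley_split_false {Z : Finset (Fin n × Bool)} {i₀ : Fin n} (u : Fin n → ℤ)
    (hz : (i₀, false) ∈ Z) (hnt : (i₀, true) ∉ Z) :
    stanleySet u Z = stanleySet u (Z.erase (i₀, false))
      ∪ stanleySet (Function.update u i₀ (u i₀ - 1)) Z := by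
  rw [stanley_erase_false u hz hnt, stanley_update_false u hz hnt]
  ext a
  constructor
  · intro h
    rcases le_or_gt (u i₀) (a i₀) with hle | hlt
    · exact Or.inl ⟨h, le_antisymm ((h i₀).2.1 hz) hle⟩
    · exact Or.inr ⟨h, by omega⟩
  · rintro (⟨h, -⟩ | ⟨h, -⟩) <;> exact h

lemma stanley_split_disj_false {Z : Finset (Fin n × Bool)} {i₀ : Fin n} (u : Fin n → ℤ)
    (hz : (i₀, false) ∈ Z) (hnt : (i₀, true) ∉ Z) :
    Disjoint (stanleySet u (Z.erase (i₀, false)))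
      (stanleySet (Function.update u i₀ (u i₀ - 1)) Z) := by
  rw [stanley_erase_false u hz hnt, stanley_update_false u hz hnt]
  rw [Set.disjoint_left]
  rintro a ⟨-, h1⟩ ⟨-, h2⟩
  omega

lemma hilb_shift_true {Z : Finset (Fin n × Bool)} {i₀ : Fin n} (u : Fin n → ℤ)
    (hz : (i₀, true) ∈ Z) (hnf : (i₀, false) ∉ Z) (hu : 0 ≤ u i₀) :
    hilbSeries (stanleySet (Function.update u i₀ (u i₀ + 1)) Z)
      = PowerSeries.X * hilbSeries (stanleySet u Z) := by
  have hset := stanley_update_true u hz hnf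
  have hinj : Function.Injective (fun a : Fin n → ℤ => Function.update a i₀ (a i₀ + 1)) := by
    intro a b hab
    funext j
    by_cases hj : j = i₀
    · subst hj
      have := congrFun hab j
      simp only [Function.update_self] at this
      omega
    · have := congrFun hab j
      simpa [Function.update_of_ne hj] using this
  ext d
  cases d with
  | zero =>
    have hzero : (PowerSeries.coeff (R := ℚ) 0) (PowerSeries.X * hilbSeries (stanleySet u Z)) = 0 := by
      rw [PowerSeries.coeff_zero_eq_constantCoeff, map_mul, PowerSeries.constantCoeff_X,
        zero_mul]
    rw [hzero]
    simp only [hilbSeries, PowerSeries.coeff_mk]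
    have hempty : {a ∈ stanleySet (Function.update u i₀ (u i₀ + 1)) Z | degAbs a = 0} = ∅ := by
      ext a
      simp only [Set.mem_empty_iff_false, iff_false, Set.mem_setOf_eq, not_and]
      intro ha hd
      rw [hset] at ha
      have h1 : 1 ≤ (a i₀).natAbs := by have := ha.2; omega
      have := coord_le_degAbs a i₀
      omega
    rw [hempty]
    simp
  | succ d =>
    rw [PowerSeries.coeff_succ_X_mul]
    simp only [hilbSeries, PowerSeries.coeff_mk]
    have himg : {a ∈ stanleySet (Function.update u i₀ (u i₀ + 1)) Z | degAbs a = d + 1}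
        = (fun a : Fin n → ℤ => Function.update a i₀ (a i₀ + 1))
          '' {a ∈ stanleySet u Z | degAbs a = d} := by
      ext b
      constructor
      · rintro ⟨hb, hd⟩
        rw [hset] at hb
        obtain ⟨hbS, hb0⟩ := hb
        refine ⟨Function.update b i₀ (b i₀ - 1), ⟨?_, ?_⟩, ?_⟩
        · intro i
          by_cases hii : i = i₀
          · subst hii
            refine ⟨fun _ => ?_, fun hf => absurd hf hnf, fun h1 _ => absurd hz h1⟩
            rw [Function.update_self]; omega
          · refine ⟨?_, ?_, ?_⟩
            · intro hi; rw [Function.update_of_ne hii]; exact (hbS i).1 hi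
            · intro hi; rw [Function.update_of_ne hii]; exact (hbS i).2.1 hi
            · intro h1 h2; rw [Function.update_of_ne hii]; exact (hbS i).2.2 h1 h2
        · have := degAbs_update b i₀ (b i₀ - 1)
          have h1 : (b i₀ - 1).natAbs + 1 = (b i₀).natAbs := by omega
          omega
        · funext j
          by_cases hj : j = i₀
          · subst hj; simp
          · simp [Function.update_of_ne hj]
      · rintro ⟨a, ⟨haS, had⟩, rfl⟩
        dsimp only
        have ha0 : u i₀ ≤ a i₀ := (haS i₀).1 hz
        constructor
        · rw [hset]
          refine ⟨?_, by rw [Function.update_self]; omega⟩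
          intro i
          by_cases hii : i = i₀
          · subst hii
            exact ⟨fun _ => by rw [Function.update_self]; omega,
              fun hf => absurd hf hnf, fun h1 _ => absurd hz h1⟩
          · refine ⟨?_, ?_, ?_⟩
            · intro hi; rw [Function.update_of_ne hii]; exact (haS i).1 hi
            · intro hi; rw [Function.update_of_ne hii]; exact (haS i).2.1 hi
            · intro h1 h2; rw [Function.update_of_ne hii]; exact (haS i).2.2 h1 h2
        · have := degAbs_update a i₀ (a i₀ + 1)
          have h1 : (a i₀ + 1).natAbs = (a i₀).natAbs + 1 := by omega
          omega
    rw [himg, Set.ncard_image_of_injective _ hinj]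

lemma hilb_shift_false {Z : Finset (Fin n × Bool)} {i₀ : Fin n} (u : Fin n → ℤ)
    (hz : (i₀, false) ∈ Z) (hnt : (i₀, true) ∉ Z) (hu : u i₀ ≤ 0) :
    hilbSeries (stanleySet (Function.update u i₀ (u i₀ - 1)) Z)
      = PowerSeries.X * hilbSeries (stanleySet u Z) := by
  have hset := stanley_update_false u hz hnt
  have hinj : Function.Injective (fun a : Fin n → ℤ => Function.update a i₀ (a i₀ - 1)) := by
    intro a b hab
    funext j
    by_cases hj : j = i₀
    · subst hj
      have := congrFun hab j
      simp only [Function.update_self] at this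
      omega
    · have := congrFun hab j
      simpa [Function.update_of_ne hj] using this
  ext d
  cases d with
  | zero =>
    have hzero : (PowerSeries.coeff (R := ℚ) 0) (PowerSeries.X * hilbSeries (stanleySet u Z)) = 0 := by
      rw [PowerSeries.coeff_zero_eq_constantCoeff, map_mul, PowerSeries.constantCoeff_X,
        zero_mul]
    rw [hzero]
    simp only [hilbSeries, PowerSeries.coeff_mk]
    have hempty : {a ∈ stanleySet (Function.update u i₀ (u i₀ - 1)) Z | degAbs a = 0} = ∅ := by
      ext a
      simp only [Set.mem_empty_iff_false, iff_false, Set.mem_setOf_eq, not_and]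
      intro ha hd
      rw [hset] at ha
      have h1 : 1 ≤ (a i₀).natAbs := by have := ha.2; omega
      have := coord_le_degAbs a i₀
      omega
    rw [hempty]
    simp
  | succ d =>
    rw [PowerSeries.coeff_succ_X_mul]
    simp only [hilbSeries, PowerSeries.coeff_mk]
    have himg : {a ∈ stanleySet (Function.update u i₀ (u i₀ - 1)) Z | degAbs a = d + 1}
        = (fun a : Fin n → ℤ => Function.update a i₀ (a i₀ - 1))
          '' {a ∈ stanleySet u Z | degAbs a = d} := by
      ext b
      constructor
      · rintro ⟨hb, hd⟩
        rw [hset] at hb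
        obtain ⟨hbS, hb0⟩ := hb
        refine ⟨Function.update b i₀ (b i₀ + 1), ⟨?_, ?_⟩, ?_⟩
        · intro i
          by_cases hii : i = i₀
          · subst hii
            refine ⟨fun ht => absurd ht hnt, fun _ => ?_, fun _ h2 => absurd hz h2⟩
            rw [Function.update_self]; omega
          · refine ⟨?_, ?_, ?_⟩
            · intro hi; rw [Function.update_of_ne hii]; exact (hbS i).1 hi
            · intro hi; rw [Function.update_of_ne hii]; exact (hbS i).2.1 hi
            · intro h1 h2; rw [Function.update_of_ne hii]; exact (hbS i).2.2 h1 h2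
        · have := degAbs_update b i₀ (b i₀ + 1)
          have h1 : (b i₀ + 1).natAbs + 1 = (b i₀).natAbs := by omega
          omega
        · funext j
          by_cases hj : j = i₀
          · subst hj; simp
          · simp [Function.update_of_ne hj]
      · rintro ⟨a, ⟨haS, had⟩, rfl⟩
        dsimp only
        have ha0 : a i₀ ≤ u i₀ := (haS i₀).2.1 hz
        constructor
        · rw [hset]
          refine ⟨?_, by rw [Function.update_self]; omega⟩
          intro i
          by_cases hii : i = i₀
          · subst hii
            exact ⟨fun ht => absurd ht hnt,
              fun _ => by rw [Function.update_self]; omega, fun _ h2 => absurd hz h2⟩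
          · refine ⟨?_, ?_, ?_⟩
            · intro hi; rw [Function.update_of_ne hii]; exact (haS i).1 hi
            · intro hi; rw [Function.update_of_ne hii]; exact (haS i).2.1 hi
            · intro h1 h2; rw [Function.update_of_ne hii]; exact (haS i).2.2 h1 h2
        · have := degAbs_update a i₀ (a i₀ - 1)
          have h1 : (a i₀ - 1).natAbs = (a i₀).natAbs + 1 := by omega
          omega
    rw [himg, Set.ncard_image_of_injective _ hinj]

lemma stanley_empty_set (u : Fin n → ℤ) :
    stanleySet u (∅ : Finset (Fin n × Bool)) = {u} := by
  ext a
  simp only [stanleySet, Set.mem_setOf_eq, Finset.notMem_empty, Set.mem_singleton_iff]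
  constructor
  · intro h
    funext i
    exact (h i).2.2 (by simp) (by simp)
  · rintro rfl i
    exact ⟨fun h => absurd h (by simp), fun h => absurd h (by simp), fun _ _ => rfl⟩

lemma hilb_singleton (u : Fin n → ℤ) :
    hilbSeries ({u} : Set (Fin n → ℤ))
      = ((Polynomial.X ^ degAbs u : Polynomial ℚ) : PowerSeries ℚ) := by
  ext d
  rw [Polynomial.coeff_coe, Polynomial.coeff_X_pow]
  simp only [hilbSeries, PowerSeries.coeff_mk]
  by_cases h : d = degAbs u
  · have hs : {a ∈ ({u} : Set (Fin n → ℤ)) | degAbs a = d} = {u} := by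
      ext a
      simp only [Set.mem_setOf_eq, Set.mem_singleton_iff]
      constructor
      · exact fun h' => h'.1
      · rintro rfl; exact ⟨rfl, h.symm⟩
    rw [hs, Set.ncard_singleton]
    simp [h]
  · have hs : {a ∈ ({u} : Set (Fin n → ℤ)) | degAbs a = d} = ∅ := by
      ext a
      simp only [Set.mem_setOf_eq, Set.mem_empty_iff_false, iff_false, not_and,
        Set.mem_singleton_iff]
      rintro rfl
      exact fun hd => h hd.symm
    rw [hs]
    simp [h]

/-- Measure for the induction: total distance of bad coordinates. -/
def meas (u : Fin n → ℤ) (Z : Finset (Fin n × Bool)) : ℕ :=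
  ∑ z ∈ Z, (if z.2 then (-(u z.1)).toNat else (u z.1).toNat)

lemma piece : ∀ (N : ℕ) (u : Fin n → ℤ) (Z : Finset (Fin n × Bool)),
    (∀ i : Fin n, ¬((i, true) ∈ Z ∧ (i, false) ∈ Z)) →
    meas u Z + Z.card ≤ N →
    ∃ Q : Polynomial ℚ,
      hilbSeries (stanleySet u Z) * (1 - PowerSeries.X) ^ Z.card = (Q : PowerSeries ℚ)
        ∧ Q.eval 1 = 1 := by
  intro N
  induction N with
  | zero =>
    intro u Z hok hN
    have hZ : Z = ∅ := Finset.card_eq_zero.mp (by omega)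
    subst hZ
    refine ⟨Polynomial.X ^ degAbs u, ?_, by simp⟩
    rw [stanley_empty_set, hilb_singleton]
    simp
  | succ N ih =>
    intro u Z hok hN
    rcases Finset.eq_empty_or_nonempty Z with hZ | ⟨⟨i₀, b⟩, hz⟩
    · subst hZ
      refine ⟨Polynomial.X ^ degAbs u, ?_, by simp⟩
      rw [stanley_empty_set, hilb_singleton]
      simp
    · have hcard : Z.card = (Z.erase (i₀, b)).card + 1 :=
        (Finset.card_erase_add_one hz).symm
      have hokE : ∀ i : Fin n, ¬((i, true) ∈ Z.erase (i₀, b) ∧ (i, false) ∈ Z.erase (i₀, b)) :=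
        fun i hi => hok i ⟨Finset.mem_of_mem_erase hi.1, Finset.mem_of_mem_erase hi.2⟩
      cases b with
      | true =>
        have hnf : (i₀, false) ∉ Z := fun h => hok i₀ ⟨hz, h⟩
        have hms : meas u Z = (-(u i₀)).toNat + meas u (Z.erase (i₀, true)) := by
          rw [meas, ← Finset.add_sum_erase _ _ hz]; rfl
        by_cases hu : 0 ≤ u i₀
        · obtain ⟨Q, hQ, hQ1⟩ := ih u (Z.erase (i₀, true)) hokE (by omega)
          refine ⟨Q, ?_, hQ1⟩
          have key : hilbSeries (stanleySet u Z) * (1 - PowerSeries.X)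
              = hilbSeries (stanleySet u (Z.erase (i₀, true))) := by
            have hadd : hilbSeries (stanleySet u Z)
                = hilbSeries (stanleySet u (Z.erase (i₀, true)))
                  + PowerSeries.X * hilbSeries (stanleySet u Z) := by
              rw [← hilb_shift_true u hz hnf hu, stanley_split_true u hz hnf]
              exact hilb_union (stanley_split_disj_true u hz hnf)
                (stanley_sliceFin _ _) (stanley_sliceFin _ _)
            rw [mul_sub, mul_one]
            nth_rewrite 1 [hadd]
            ring
          calc hilbSeries (stanleySet u Z) * (1 - PowerSeries.X) ^ Z.card
              = hilbSeries (stanleySet u Z) * (1 - PowerSeries.X)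
                  * (1 - PowerSeries.X) ^ (Z.erase (i₀, true)).card := by
                rw [hcard, pow_succ]; ring
            _ = (Q : PowerSeries ℚ) := by rw [key, hQ]
        · push_neg at hu
          obtain ⟨Q₁, hQ₁, hQ₁1⟩ := ih u (Z.erase (i₀, true)) hokE (by omega)
          have hsame : meas (Function.update u i₀ (u i₀ + 1)) (Z.erase (i₀, true))
              = meas u (Z.erase (i₀, true)) := by
            refine Finset.sum_congr rfl fun z hzz => ?_
            have hz1 : z.1 ≠ i₀ := by
              rcases z with ⟨j, c⟩
              intro h1
              simp only at h1
              subst h1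
              cases c
              · exact hnf (Finset.mem_of_mem_erase hzz)
              · exact (Finset.mem_erase.mp hzz).1 rfl
            rw [Function.update_of_ne hz1]
          have e1 : meas (Function.update u i₀ (u i₀ + 1)) Z
              = (-(u i₀ + 1)).toNat + meas (Function.update u i₀ (u i₀ + 1))
                  (Z.erase (i₀, true)) := by
            rw [meas, ← Finset.add_sum_erase _ _ hz]
            simp [meas]
          have hmeas' : meas (Function.update u i₀ (u i₀ + 1)) Z + 1 ≤ meas u Z := by
            rw [e1, hsame, hms]; omega
          obtain ⟨Q₂, hQ₂, hQ₂1⟩ := ih (Function.update u i₀ (u i₀ + 1)) Z hok (by omega)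
          refine ⟨Q₁ * (1 - Polynomial.X) + Q₂, ?_, by simp [hQ₁1, hQ₂1]⟩
          have hadd : hilbSeries (stanleySet u Z)
              = hilbSeries (stanleySet u (Z.erase (i₀, true)))
                + hilbSeries (stanleySet (Function.update u i₀ (u i₀ + 1)) Z) := by
            rw [stanley_split_true u hz hnf]
            exact hilb_union (stanley_split_disj_true u hz hnf)
              (stanley_sliceFin _ _) (stanley_sliceFin _ _)
          rw [hadd, add_mul, hQ₂]
          have h2 : hilbSeries (stanleySet u (Z.erase (i₀, true))) * (1 - PowerSeries.X) ^ Z.card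
              = (Q₁ : PowerSeries ℚ) * (1 - PowerSeries.X) := by
            rw [hcard, pow_succ, ← mul_assoc, hQ₁]
          rw [h2]
          push_cast
          ring
      | false =>
        have hnt : (i₀, true) ∉ Z := fun h => hok i₀ ⟨h, hz⟩
        have hms : meas u Z = (u i₀).toNat + meas u (Z.erase (i₀, false)) := by
          rw [meas, ← Finset.add_sum_erase _ _ hz]; rfl
        by_cases hu : u i₀ ≤ 0
        · obtain ⟨Q, hQ, hQ1⟩ := ih u (Z.erase (i₀, false)) hokE (by omega)
          refine ⟨Q, ?_, hQ1⟩
          have key : hilbSeries (stanleySet u Z) * (1 - PowerSeries.X)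
              = hilbSeries (stanleySet u (Z.erase (i₀, false))) := by
            have hadd : hilbSeries (stanleySet u Z)
                = hilbSeries (stanleySet u (Z.erase (i₀, false)))
                  + PowerSeries.X * hilbSeries (stanleySet u Z) := by
              rw [← hilb_shift_false u hz hnt hu, stanley_split_false u hz hnt]
              exact hilb_union (stanley_split_disj_false u hz hnt)
                (stanley_sliceFin _ _) (stanley_sliceFin _ _)
            rw [mul_sub, mul_one]
            nth_rewrite 1 [hadd]
            ring
          calc hilbSeries (stanleySet u Z) * (1 - PowerSeries.X) ^ Z.card
              = hilbSeries (stanleySet u Z) * (1 - PowerSeries.X)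
                  * (1 - PowerSeries.X) ^ (Z.erase (i₀, false)).card := by
                rw [hcard, pow_succ]; ring
            _ = (Q : PowerSeries ℚ) := by rw [key, hQ]
        · push_neg at hu
          obtain ⟨Q₁, hQ₁, hQ₁1⟩ := ih u (Z.erase (i₀, false)) hokE (by omega)
          have hsame : meas (Function.update u i₀ (u i₀ - 1)) (Z.erase (i₀, false))
              = meas u (Z.erase (i₀, false)) := by
            refine Finset.sum_congr rfl fun z hzz => ?_
            have hz1 : z.1 ≠ i₀ := by
              rcases z with ⟨j, c⟩
              intro h1
              simp only at h1
              subst h1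
              cases c
              · exact (Finset.mem_erase.mp hzz).1 rfl
              · exact hnt (Finset.mem_of_mem_erase hzz)
            rw [Function.update_of_ne hz1]
          have e1 : meas (Function.update u i₀ (u i₀ - 1)) Z
              = (u i₀ - 1).toNat + meas (Function.update u i₀ (u i₀ - 1))
                  (Z.erase (i₀, false)) := by
            rw [meas, ← Finset.add_sum_erase _ _ hz]
            simp [meas]
          have hmeas' : meas (Function.update u i₀ (u i₀ - 1)) Z + 1 ≤ meas u Z := by
            rw [e1, hsame, hms]; omega
          obtain ⟨Q₂, hQ₂, hQ₂1⟩ := ih (Function.update u i₀ (u i₀ - 1)) Z hok (by omega)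
          refine ⟨Q₁ * (1 - Polynomial.X) + Q₂, ?_, by simp [hQ₁1, hQ₂1]⟩
          have hadd : hilbSeries (stanleySet u Z)
              = hilbSeries (stanleySet u (Z.erase (i₀, false)))
                + hilbSeries (stanleySet (Function.update u i₀ (u i₀ - 1)) Z) := by
            rw [stanley_split_false u hz hnt]
            exact hilb_union (stanley_split_disj_false u hz hnt)
              (stanley_sliceFin _ _) (stanley_sliceFin _ _)
          rw [hadd, add_mul, hQ₂]
          have h2 : hilbSeries (stanleySet u (Z.erase (i₀, false))) * (1 - PowerSeries.X) ^ Z.card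
              = (Q₁ : PowerSeries ℚ) * (1 - PowerSeries.X) := by
            rw [hcard, pow_succ, ← mul_assoc, hQ₁]
          rw [h2]
          push_cast
          ring

lemma decomp {r : ℕ} (u : Fin r → Fin n → ℤ) (Z : Fin r → Finset (Fin n × Bool))
    (M : Set (Fin n → ℤ))
    (hok : ∀ i, ∀ j : Fin n, ¬((j, true) ∈ Z i ∧ (j, false) ∈ Z i))
    (hdisj : Pairwise fun i j => Disjoint (stanleySet (u i) (Z i)) (stanleySet (u j) (Z j)))
    (hM : (⋃ i, stanleySet (u i) (Z i)) = M) :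
    ∃ P : Polynomial ℚ,
      hilbSeries M * (1 - PowerSeries.X) ^ (Finset.univ.sup fun i => (Z i).card)
          = (P : PowerSeries ℚ) ∧
      P.eval 1 = ((Finset.univ.filter fun i : Fin r =>
          (Z i).card = Finset.univ.sup fun j => (Z j).card).card : ℚ) := by
  set d := Finset.univ.sup fun i => (Z i).card with hd
  choose Q hQ hQ1 using fun i => piece (meas (u i) (Z i) + (Z i).card) (u i) (Z i) (hok i) le_rfl
  refine ⟨∑ i, Q i * (1 - Polynomial.X) ^ (d - (Z i).card), ?_, ?_⟩
  · rw [← hM, hilb_iUnion _ (fun i => stanley_sliceFin _ _) hdisj, Finset.sum_mul]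
    have hstep : ∀ i ∈ Finset.univ, hilbSeries (stanleySet (u i) (Z i)) * (1 - PowerSeries.X) ^ d
        = ((Q i * (1 - Polynomial.X) ^ (d - (Z i).card) : Polynomial ℚ) : PowerSeries ℚ) := by
      intro i _
      have hle : (Z i).card ≤ d :=
        Finset.le_sup (f := fun j => (Z j).card) (Finset.mem_univ i)
      have hpow : (1 - PowerSeries.X : PowerSeries ℚ) ^ d
          = (1 - PowerSeries.X) ^ (Z i).card * (1 - PowerSeries.X) ^ (d - (Z i).card) := by
        rw [← pow_add, Nat.add_sub_cancel' hle]
      rw [hpow, ← mul_assoc, hQ i]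
      push_cast
      ring
    rw [Finset.sum_congr rfl hstep]
    conv_rhs => rw [← Polynomial.coeToPowerSeries.ringHom_apply, map_sum]
    exact Finset.sum_congr rfl fun i _ => (Polynomial.coeToPowerSeries.ringHom_apply (φ := _)).symm
  · rw [Polynomial.eval_finset_sum]
    have hstep : ∀ i ∈ Finset.univ,
        (Q i * (1 - Polynomial.X) ^ (d - (Z i).card)).eval 1
          = if (Z i).card = d then (1 : ℚ) else 0 := by
      intro i _
      have hle : (Z i).card ≤ d :=
        Finset.le_sup (f := fun j => (Z j).card) (Finset.mem_univ i)
      rw [Polynomial.eval_mul, hQ1 i, one_mul, Polynomial.eval_pow, Polynomial.eval_sub,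
        Polynomial.eval_one, Polynomial.eval_X, sub_self, zero_pow_eq]
      congr 1
      simp only [eq_iff_iff]
      omega
    rw [Finset.sum_congr rfl hstep, Finset.sum_boole]

end SDaux

/-- For monomial ideals `J ⊂ I ⊂ S_f` and a Stanley decomposition
`D : I/J = ⊕_{i=1}^r u_i K[Z_i]` with `d = max{|Z_i|}`:
`H_{I/J}(t) = P_{I/J}(t)/(1-t)^d` with `P_{I/J}(1) = #{i : |Z_i| = d}`.  Consequently,
the maximal dimension `d` and the number of Stanley spaces of maximal dimension are the
same for every Stanley decomposition of `I/J`. -/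
theorem hilbert_series_stanley_decomposition {n : ℕ} (A : Finset (Fin n))
    (I J : Set (Fin n → ℤ))
    (hI : IsMonomialIdeal A I) (hJ : IsMonomialIdeal A J) (hJI : J ⊂ I)
    {r : ℕ} (u : Fin r → Fin n → ℤ) (Z : Fin r → Finset (Fin n × Bool))
    (hD : IsStanleyDecompOn A (I \ J) u Z) :
    (∃ P : Polynomial ℚ,
      hilbSeries (I \ J) * (1 - PowerSeries.X) ^ (Finset.univ.sup fun i => (Z i).card) =
        (P : PowerSeries ℚ) ∧
      P.eval 1 = ((Finset.univ.filter fun i : Fin r =>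
          (Z i).card = Finset.univ.sup fun j => (Z j).card).card : ℚ)) ∧
    ∀ (r' : ℕ) (u' : Fin r' → Fin n → ℤ) (Z' : Fin r' → Finset (Fin n × Bool)),
      IsStanleyDecompOn A (I \ J) u' Z' →
      (Finset.univ.sup fun i => (Z i).card) = (Finset.univ.sup fun i => (Z' i).card) ∧
      (Finset.univ.filter fun i : Fin r =>
          (Z i).card = Finset.univ.sup fun j => (Z j).card).card =
        (Finset.univ.filter fun i : Fin r' =>
          (Z' i).card = Finset.univ.sup fun j => (Z' j).card).card := by
  classical
  obtain ⟨a₀, haI, haJ⟩ := Set.exists_of_ssubset hJI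
  have ha₀ : a₀ ∈ I \ J := ⟨haI, haJ⟩
  obtain ⟨hfin, hok, hdisj, hM⟩ := hD
  obtain ⟨P, hP, hP1⟩ := SDaux.decomp u Z (I \ J) (fun i => (hok i).2) hdisj hM
  have hcount : ∀ (r' : ℕ) (u' : Fin r' → Fin n → ℤ) (Z' : Fin r' → Finset (Fin n × Bool)),
      (⋃ i, stanleySet (u' i) (Z' i)) = I \ J →
      (Finset.univ.filter fun i : Fin r' =>
        (Z' i).card = Finset.univ.sup fun j => (Z' j).card).card ≠ 0 := by
    intro r' u' Z' hM'
    have hmem : a₀ ∈ ⋃ i, stanleySet (u' i) (Z' i) := by rw [hM']; exact ha₀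
    obtain ⟨i₀, -⟩ := Set.mem_iUnion.mp hmem
    have huniv : (Finset.univ : Finset (Fin r')).Nonempty := ⟨i₀, Finset.mem_univ _⟩
    obtain ⟨i₁, -, hsup⟩ := Finset.exists_mem_eq_sup Finset.univ huniv fun j => (Z' j).card
    exact Finset.card_ne_zero_of_mem
      (Finset.mem_filter.mpr ⟨Finset.mem_univ i₁, hsup.symm⟩)
  have hle : ∀ {d1 d2 : ℕ} {P1 P2 : Polynomial ℚ},
      hilbSeries (I \ J) * (1 - PowerSeries.X) ^ d1 = (P1 : PowerSeries ℚ) →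
      hilbSeries (I \ J) * (1 - PowerSeries.X) ^ d2 = (P2 : PowerSeries ℚ) →
      P1.eval 1 ≠ 0 → d1 ≤ d2 := by
    intro d1 d2 P1 P2 h1 h2 hp1
    by_contra hlt
    push_neg at hlt
    have key : ∀ k : ℕ, hilbSeries (I \ J) * (1 - PowerSeries.X) ^ (d2 + k)
        = ((P2 * (1 - Polynomial.X) ^ k : Polynomial ℚ) : PowerSeries ℚ) := by
      intro k
      rw [pow_add, ← mul_assoc, h2, Polynomial.coe_mul, Polynomial.coe_pow,
        Polynomial.coe_sub, Polynomial.coe_one, Polynomial.coe_X]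
    have hpow : (P1 : PowerSeries ℚ) = ((P2 * (1 - Polynomial.X) ^ (d1 - d2) :
        Polynomial ℚ) : PowerSeries ℚ) := by
      rw [← key (d1 - d2), show d2 + (d1 - d2) = d1 by omega, h1]
    have hP12 : P1 = P2 * (1 - Polynomial.X) ^ (d1 - d2) := by exact_mod_cast hpow
    apply hp1
    rw [hP12, Polynomial.eval_mul, Polynomial.eval_pow, Polynomial.eval_sub,
      Polynomial.eval_one, Polynomial.eval_X, sub_self, zero_pow (by omega), mul_zero]
  refine ⟨⟨P, hP, hP1⟩, ?_⟩
  intro r' u' Z' hD'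
  obtain ⟨-, hok', hdisj', hM'⟩ := hD'
  obtain ⟨P', hP', hP1'⟩ := SDaux.decomp u' Z' (I \ J) (fun i => (hok' i).2) hdisj' hM'
  have hq : P.eval 1 ≠ 0 := by
    rw [hP1]; exact Nat.cast_ne_zero.mpr (hcount r u Z hM)
  have hq' : P'.eval 1 ≠ 0 := by
    rw [hP1']; exact Nat.cast_ne_zero.mpr (hcount r' u' Z' hM')
  have hdd : (Finset.univ.sup fun i => (Z i).card) = (Finset.univ.sup fun i => (Z' i).card) :=
    le_antisymm (hle hP hP' hq) (hle hP' hP hq')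
  refine ⟨hdd, ?_⟩
  have hPP : (P : PowerSeries ℚ) = (P' : PowerSeries ℚ) := by rw [← hP, ← hP', hdd]
  have hPeq : P = P' := by exact_mod_cast hPP
  have heval : ((Finset.univ.filter fun i : Fin r =>
        (Z i).card = Finset.univ.sup fun j => (Z j).card).card : ℚ)
      = ((Finset.univ.filter fun i : Fin r' =>
        (Z' i).card = Finset.univ.sup fun j => (Z' j).card).card : ℚ) := by
    rw [← hP1, ← hP1', hPeq]
  exact_mod_cast heval
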